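/- Let K be a closed convex cone in ℝⁿ with nonempty interior and polar cone K° = {s : ⟨s,x⟩ ≤ 0 for all x ∈ K}, let A ∈ ℝ^{m×n}, b ∈ ℝᵐ, c ∈ ℝⁿ, t > 0, and assume the Slater condition: there exists x̄ in the interior of K with Ax̄ = b. Then for every p ∈ ℝⁿ, the augmented Lagrangian dual value equals the Moreau–Yosida value: sup over y ∈ ℝᵐ and u ∈ K° of [⟨b, y⟩ − ⟨p, Aᵀy − u − c⟩ − (t/2)‖Aᵀy − u − c‖²] = inf over x ∈ K with Ax = b of [⟨c, x⟩ + (1/(2t))‖x − p‖²]. -/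

import Mathlib

open scoped Matrix RealInnerProductSpace
open Filter Topology

/-- Matrix-vector multiplication, viewed as a map between Euclidean spaces. -/
noncomputable def mulVecE {m n : ℕ} (A : Matrix (Fin m) (Fin n) ℝ)
    (x : EuclideanSpace ℝ (Fin n)) : EuclideanSpace ℝ (Fin m) :=
  WithLp.toLp 2 (A.mulVec x)

lemma inner_mulVecE {m n : ℕ} (A : Matrix (Fin m) (Fin n) ℝ)
    (x : EuclideanSpace ℝ (Fin n)) (y : EuclideanSpace ℝ (Fin m)) :
    ⟪mulVecE A x, y⟫ = ⟪x, mulVecE Aᵀ y⟫ := by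
  simp only [mulVecE, PiLp.inner_apply, RCLike.inner_apply, conj_trivial,
    Matrix.mulVec, dotProduct, Matrix.transpose_apply, Finset.sum_mul, Finset.mul_sum]
  rw [Finset.sum_comm]
  congr 1; ext i; congr 1; ext j; ring

lemma mulVecE_add {m n : ℕ} (A : Matrix (Fin m) (Fin n) ℝ) (x y : EuclideanSpace ℝ (Fin n)) :
    mulVecE A (x + y) = mulVecE A x + mulVecE A y := by
  simp only [mulVecE, WithLp.ofLp_add, Matrix.mulVec_add, WithLp.toLp_add]

lemma mulVecE_smul {m n : ℕ} (A : Matrix (Fin m) (Fin n) ℝ) (s : ℝ) (x : EuclideanSpace ℝ (Fin n)) :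
    mulVecE A (s • x) = s • mulVecE A x := by
  simp only [mulVecE, WithLp.ofLp_smul, Matrix.mulVec_smul, WithLp.toLp_smul]

noncomputable def mulVecCLM {m n : ℕ} (A : Matrix (Fin m) (Fin n) ℝ) :
    EuclideanSpace ℝ (Fin n) →L[ℝ] EuclideanSpace ℝ (Fin m) :=
  LinearMap.toContinuousLinearMap
    { toFun := mulVecE A
      map_add' := mulVecE_add A
      map_smul' := by intro s x; simp [mulVecE_smul] }

lemma mulVecE_continuous {m n : ℕ} (A : Matrix (Fin m) (Fin n) ℝ) :
    Continuous (fun x : EuclideanSpace ℝ (Fin n) => mulVecE A x) :=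
  (mulVecCLM A).continuous

lemma sq_norm_combo {E : Type*} [NormedAddCommGroup E] [InnerProductSpace ℝ E]
    (u v : E) (a b : ℝ) (hab : a + b = 1) :
    ‖a • u + b • v‖ ^ 2 = a * ‖u‖ ^ 2 + b * ‖v‖ ^ 2 - a * b * ‖u - v‖ ^ 2 := by
  have hb : b = 1 - a := by linarith
  subst hb
  rw [norm_add_sq_real, norm_sub_sq_real, norm_smul, norm_smul,
    real_inner_smul_left, real_inner_smul_right]
  simp only [mul_pow, sq_abs, Real.norm_eq_abs]
  ring

lemma key_id {m n : ℕ} (A : Matrix (Fin m) (Fin n) ℝ) (b : EuclideanSpace ℝ (Fin m))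
    (c p x u : EuclideanSpace ℝ (Fin n)) (y : EuclideanSpace ℝ (Fin m)) (t : ℝ) (ht : t ≠ 0) :
    (⟪c, x⟫ + 1 / (2 * t) * ‖x - p‖ ^ 2 + ⟪y, b - mulVecE A x⟫)
      - (⟪b, y⟫ - ⟪p, mulVecE Aᵀ y - u - c⟫ - (t / 2) * ‖mulVecE Aᵀ y - u - c‖ ^ 2)
    = (1 / (2 * t)) * ‖(x - p) - t • (mulVecE Aᵀ y - u - c)‖ ^ 2 - ⟪x, u⟫ := by
  set d := mulVecE Aᵀ y - u - c with hd
  have hAy : mulVecE Aᵀ y = d + u + c := by rw [hd]; abel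
  have h1 : ⟪y, mulVecE A x⟫ = ⟪x, d⟫ + ⟪x, u⟫ + ⟪x, c⟫ := by
    rw [real_inner_comm, inner_mulVecE, hAy, inner_add_right, inner_add_right]
  have h2 : ‖(x - p) - t • d‖ ^ 2
      = ‖x - p‖ ^ 2 - 2 * (t * (⟪x, d⟫ - ⟪p, d⟫)) + t ^ 2 * ‖d‖ ^ 2 := by
    rw [norm_sub_sq_real, real_inner_smul_right, inner_sub_left, norm_smul]
    simp [mul_pow, sq_abs]
  rw [inner_sub_right, h1, h2, real_inner_comm b y, real_inner_comm c x]
  field_simp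
  ring

set_option maxHeartbeats 2000000 in
/-- Under the Slater condition, the augmented Lagrangian dual value of the linear
conic problem equals the Moreau–Yosida value: for every `p`,
`sup_{y, u ∈ K°} [⟨b,y⟩ − ⟨p, Aᵀy − u − c⟩ − (t/2)‖Aᵀy − u − c‖²]
  = inf_{x ∈ K, Ax = b} [⟨c,x⟩ + ‖x − p‖²/(2t)]`. -/
theorem augmented_lagrangian_eq_moreau_yosida
    {m n : ℕ} (K : Set (EuclideanSpace ℝ (Fin n)))
    (hKcl : IsClosed K) (hKconv : Convex ℝ K)
    (hKcone : ∀ x ∈ K, ∀ s : ℝ, 0 ≤ s → s • x ∈ K)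
    (hKint : (interior K).Nonempty)
    (Ko : Set (EuclideanSpace ℝ (Fin n)))
    (hKo : Ko = {s | ∀ x ∈ K, ⟪s, x⟫ ≤ 0})
    (A : Matrix (Fin m) (Fin n) ℝ) (b : EuclideanSpace ℝ (Fin m))
    (c : EuclideanSpace ℝ (Fin n)) (t : ℝ) (ht : 0 < t)
    (hSlater : ∃ xb ∈ interior K, mulVecE A xb = b) :
    ∀ p : EuclideanSpace ℝ (Fin n),
      sSup {v : ℝ | ∃ (y : EuclideanSpace ℝ (Fin m)) (u : EuclideanSpace ℝ (Fin n)),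
          u ∈ Ko ∧
          v = ⟪b, y⟫ - ⟪p, mulVecE Aᵀ y - u - c⟫
              - (t / 2) * ‖mulVecE Aᵀ y - u - c‖ ^ 2}
        = sInf {v : ℝ | ∃ x ∈ K, mulVecE A x = b ∧
            v = ⟪c, x⟫ + (1 / (2 * t)) * ‖x - p‖ ^ 2} := by
  intro p
  obtain ⟨xb, hxbi, hxbA⟩ := hSlater
  have hxbK : xb ∈ K := interior_subset hxbi
  set f : EuclideanSpace ℝ (Fin n) → ℝ :=
    fun x => ⟪c, x⟫ + 1 / (2 * t) * ‖x - p‖ ^ 2 with hf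
  have hfcont : Continuous f :=
    (continuous_const.inner continuous_id).add
      (continuous_const.mul ((continuous_id.sub continuous_const).norm.pow 2))
  set D : Set ℝ := {v : ℝ | ∃ (y : EuclideanSpace ℝ (Fin m)) (u : EuclideanSpace ℝ (Fin n)),
      u ∈ Ko ∧ v = ⟪b, y⟫ - ⟪p, mulVecE Aᵀ y - u - c⟫
          - (t / 2) * ‖mulVecE Aᵀ y - u - c‖ ^ 2} with hD
  set P : Set ℝ := {v : ℝ | ∃ x ∈ K, mulVecE A x = b ∧
      v = ⟪c, x⟫ + (1 / (2 * t)) * ‖x - p‖ ^ 2} with hP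
  have hPne : P.Nonempty := ⟨f xb, xb, hxbK, hxbA, rfl⟩
  have h0Ko : (0 : EuclideanSpace ℝ (Fin n)) ∈ Ko := by
    rw [hKo]; intro x hx; simp
  have hDne : D.Nonempty := ⟨_, 0, 0, h0Ko, rfl⟩
  -- weak duality
  have hweak : ∀ v ∈ D, ∀ w ∈ P, v ≤ w := by
    rintro v ⟨y, u, hu, rfl⟩ w ⟨x, hx, hAx, rfl⟩
    have hb0 : ⟪y, b - mulVecE A x⟫ = (0 : ℝ) := by rw [hAx]; simp
    have hux : ⟪x, u⟫ ≤ (0 : ℝ) := by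
      rw [real_inner_comm]; exact (hKo ▸ hu) x hx
    have h := key_id A b c p x u y t ht.ne'
    rw [hb0] at h
    have hsq : (0 : ℝ) ≤ (1 / (2 * t)) * ‖(x - p) - t • (mulVecE Aᵀ y - u - c)‖ ^ 2 := by
      positivity
    linarith
  obtain ⟨w₀, hw₀⟩ := hPne
  obtain ⟨v₀, hv₀⟩ := hDne
  have hDbdd : BddAbove D := ⟨w₀, fun v hv => hweak v hv w₀ hw₀⟩
  have hPbdd : BddBelow P := ⟨v₀, fun w hw => hweak v₀ hv₀ w hw⟩
  have hsup_le : sSup D ≤ sInf P :=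
    csSup_le ⟨v₀, hv₀⟩ (fun v hv => le_csInf ⟨w₀, hw₀⟩ (fun w hw => hweak v hv w hw))
  set M := sInf P with hM
  -- the hard direction
  have hard : ∀ ε : ℝ, 0 < ε → M - ε ≤ sSup D := by
    intro ε hε
    set S : Set (EuclideanSpace ℝ (Fin m) × ℝ) :=
      {z | ∃ x ∈ K, mulVecE A x - b = z.1 ∧ f x ≤ z.2} with hS
    -- convexity of S
    have hSconv : Convex ℝ S := by
      rintro z₁ ⟨x₁, hx₁, hz₁, hf₁⟩ z₂ ⟨x₂, hx₂, hz₂, hf₂⟩ a a' ha ha' haa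
      refine ⟨a • x₁ + a' • x₂, hKconv hx₁ hx₂ ha ha' haa, ?_, ?_⟩
      · have ha'' : a' = 1 - a := by linarith
        subst ha''
        have hfst : (a • z₁ + (1 - a) • z₂).1 = a • z₁.1 + (1 - a) • z₂.1 := rfl
        rw [hfst, ← hz₁, ← hz₂, mulVecE_add, mulVecE_smul, mulVecE_smul]
        module
      · have hcombo : a • x₁ + a' • x₂ - p = a • (x₁ - p) + a' • (x₂ - p) := by
          have ha'' : a' = 1 - a := by linarith
          subst ha''; module
        have hfle : f (a • x₁ + a' • x₂) ≤ a * f x₁ + a' * f x₂ := by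
          simp only [hf]
          rw [hcombo, sq_norm_combo _ _ a a' haa, inner_add_right,
            real_inner_smul_right, real_inner_smul_right]
          have h1 : 0 ≤ a * a' * ‖(x₁ - p) - (x₂ - p)‖ ^ 2 := by positivity
          have h2 : 0 < 1 / (2 * t) := by positivity
          nlinarith
        have : a * f x₁ + a' * f x₂ ≤ a * z₁.2 + a' * z₂.2 := by
          have := mul_le_mul_of_nonneg_left hf₁ ha
          have := mul_le_mul_of_nonneg_left hf₂ ha'
          linarith
        calc f (a • x₁ + a' • x₂) ≤ a * z₁.2 + a' * z₂.2 := le_trans hfle this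
          _ = (a • z₁ + a' • z₂).2 := rfl
    -- the point (0, M - ε) is not in the closure of S
    have hnotin : ((0 : EuclideanSpace ℝ (Fin m)), M - ε) ∉ closure S := by
      intro hmem
      rw [mem_closure_iff_seq_limit] at hmem
      obtain ⟨z, hzS, hzlim⟩ := hmem
      choose x hxK hxA hxf using hzS
      have h1 : Tendsto (fun k => (z k).1) atTop (𝓝 (0 : EuclideanSpace ℝ (Fin m))) :=
        (continuous_fst.tendsto _).comp hzlim
      have h2 : Tendsto (fun k => (z k).2) atTop (𝓝 (M - ε)) :=
        (continuous_snd.tendsto _).comp hzlim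
      obtain ⟨N, hN⟩ := eventually_atTop.1
        (h2.eventually_lt_const (show M - ε < M - ε + 1 by linarith))
      -- coercivity bound
      set R2 : ℝ := (M - ε + 1 + ‖c‖ * ‖p‖ + t * ‖c‖ ^ 2) * (4 * t) with hR2
      have hcoer : ∀ x' : EuclideanSpace ℝ (Fin n), f x' ≤ M - ε + 1 → ‖x' - p‖ ^ 2 ≤ R2 := by
        intro x' hx'
        have hip : -(‖c‖ * ‖x'‖) ≤ ⟪c, x'⟫ := by
          have := abs_real_inner_le_norm c x'
          rw [abs_le] at this
          linarith [this.1]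
        have hnx : ‖x'‖ ≤ ‖x' - p‖ + ‖p‖ := by
          calc ‖x'‖ = ‖(x' - p) + p‖ := by rw [sub_add_cancel]
            _ ≤ ‖x' - p‖ + ‖p‖ := norm_add_le _ _
        have hfx : ⟪c, x'⟫ + 1 / (2 * t) * ‖x' - p‖ ^ 2 ≤ M - ε + 1 := hx'
        have hc0 : 0 ≤ ‖c‖ := norm_nonneg _
        have hq : ‖c‖ * ‖x' - p‖ ≤ 1 / (4 * t) * ‖x' - p‖ ^ 2 + t * ‖c‖ ^ 2 := by
          have hpos : (0:ℝ) ≤ (1 / (4 * t)) * (‖x' - p‖ - 2 * t * ‖c‖) ^ 2 := by positivity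
          have hexp : 1 / (4 * t) * ‖x' - p‖ ^ 2 + t * ‖c‖ ^ 2 - ‖c‖ * ‖x' - p‖
              = (1 / (4 * t)) * (‖x' - p‖ - 2 * t * ‖c‖) ^ 2 := by
            field_simp
            ring
          linarith
        have hquarter : 1 / (2 * t) * ‖x' - p‖ ^ 2 - 1 / (4 * t) * ‖x' - p‖ ^ 2
            = ‖x' - p‖ ^ 2 / (4 * t) := by
          field_simp
          ring
        have hstep : ‖x' - p‖ ^ 2 / (4 * t) ≤ M - ε + 1 + ‖c‖ * ‖p‖ + t * ‖c‖ ^ 2 := by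
          have hmul := mul_le_mul_of_nonneg_left hnx hc0
          linarith
        rw [div_le_iff₀ (by positivity : (0:ℝ) < 4 * t)] at hstep
        rw [hR2]
        exact hstep
      set R : ℝ := Real.sqrt R2 with hRdef
      have hball : ∀ k, x (k + N) ∈ Metric.closedBall p R := by
        intro k
        have hfk : f (x (k + N)) ≤ M - ε + 1 :=
          le_trans (hxf (k + N)) (le_of_lt (hN (k + N) (Nat.le_add_left N k)))
        have := hcoer _ hfk
        rw [Metric.mem_closedBall, dist_eq_norm]
        calc ‖x (k + N) - p‖ = Real.sqrt (‖x (k + N) - p‖ ^ 2) := by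
              rw [Real.sqrt_sq (norm_nonneg _)]
          _ ≤ Real.sqrt R2 := Real.sqrt_le_sqrt this
      obtain ⟨xinf, hxinfball, φ, hφmono, hφtend⟩ :=
        (isCompact_closedBall p R).tendsto_subseq hball
      have hφat : Tendsto (fun k => φ k + N) atTop atTop :=
        tendsto_atTop_mono (fun k => Nat.le_add_right (φ k) N) hφmono.tendsto_atTop
      have hxinfK : xinf ∈ K :=
        hKcl.mem_of_tendsto hφtend (Eventually.of_forall fun k => hxK _)
      have hxinfA : mulVecE A xinf = b := by
        have hc1 : Tendsto (fun k => mulVecE A (x (φ k + N)) - b) atTop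
            (𝓝 (mulVecE A xinf - b)) :=
          (((mulVecE_continuous A).tendsto _).comp hφtend).sub tendsto_const_nhds
        have hc2 : Tendsto (fun k => mulVecE A (x (φ k + N)) - b) atTop
            (𝓝 (0 : EuclideanSpace ℝ (Fin m))) := by
          have : (fun k => mulVecE A (x (φ k + N)) - b) = fun k => (z (φ k + N)).1 := by
            funext k; exact hxA _
          rw [this]
          exact h1.comp hφat
        have := tendsto_nhds_unique hc1 hc2
        rwa [sub_eq_zero] at this
      have hxinff : f xinf ≤ M - ε := by
        have hc1 : Tendsto (fun k => f (x (φ k + N))) atTop (𝓝 (f xinf)) :=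
          (hfcont.tendsto _).comp hφtend
        have hc2 : Tendsto (fun k => (z (φ k + N)).2) atTop (𝓝 (M - ε)) :=
          h2.comp hφat
        exact le_of_tendsto_of_tendsto' hc1 hc2 fun k => hxf _
      have : M ≤ f xinf := csInf_le hPbdd ⟨xinf, hxinfK, hxinfA, rfl⟩
      linarith
    -- separation
    obtain ⟨φ, r, hr1, hr2⟩ :=
      geometric_hahn_banach_point_closed hSconv.closure isClosed_closure hnotin
    have hr2' : ∀ z ∈ S, r < φ z := fun z hz => hr2 z (subset_closure hz)
    -- decompose the functional
    set lam : ℝ := φ (0, 1) with hlam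
    have hφsplit : ∀ (v : EuclideanSpace ℝ (Fin m)) (μ : ℝ), φ (v, μ) = φ (v, 0) + μ * lam := by
      intro v μ
      have : (v, μ) = (v, (0 : ℝ)) + μ • ((0 : EuclideanSpace ℝ (Fin m)), (1 : ℝ)) := by
        simp [Prod.ext_iff]
      rw [this, map_add, map_smul]
      simp [hlam, smul_eq_mul]
    -- lam > 0
    have hSmem : ∀ x ∈ K, ((mulVecE A x - b), f x) ∈ S := fun x hx => ⟨x, hx, rfl, le_refl _⟩
    have hlampos : 0 < lam := by
      rcases lt_trichotomy lam 0 with hneg | hzero | hpos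
      · -- use x = xb with large μ
        have hmem : ∀ μ : ℝ, f xb ≤ μ → ((0 : EuclideanSpace ℝ (Fin m)), μ) ∈ S := by
          intro μ hμ
          exact ⟨xb, hxbK, by rw [hxbA]; simp, hμ⟩
        set μ₀ : ℝ := max (f xb) ((r - φ (0, 0)) / lam) with hμ₀
        have h := hr2' _ (hmem μ₀ (le_max_left _ _))
        rw [hφsplit] at h
        have hle : (r - φ (0, 0)) / lam ≤ μ₀ := le_max_right _ _
        rw [div_le_iff_of_neg hneg] at hle
        linarith
      · have h := hr2' _ (hSmem xb hxbK)
        rw [hxbA, sub_self, hφsplit, hzero, mul_zero, add_zero] at h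
        rw [hφsplit, hzero, mul_zero, add_zero] at hr1
        linarith
      · exact hpos
    -- Riesz representation of the E_m part
    set ψ : EuclideanSpace ℝ (Fin m) →L[ℝ] ℝ :=
      φ.comp (ContinuousLinearMap.inl ℝ (EuclideanSpace ℝ (Fin m)) ℝ) with hψ
    set y : EuclideanSpace ℝ (Fin m) :=
      (InnerProductSpace.toDual ℝ (EuclideanSpace ℝ (Fin m))).symm ψ with hy
    have hyv : ∀ v : EuclideanSpace ℝ (Fin m), ⟪y, v⟫ = φ (v, 0) := by
      intro v
      rw [hy, InnerProductSpace.toDual_symm_apply]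
      rfl
    -- the "Lagrangian" lower bound
    set yh : EuclideanSpace ℝ (Fin m) := (-(1 / lam)) • y with hyh
    have hL0 : ∀ x ∈ K, M - ε < f x + ⟪yh, b - mulVecE A x⟫ := by
      intro x hx
      have h := hr2' _ (hSmem x hx)
      rw [hφsplit, ← hyv] at h
      have hpt : φ ((0 : EuclideanSpace ℝ (Fin m)), M - ε) = (M - ε) * lam := by
        rw [hφsplit]; simp; exact map_zero φ
      rw [hpt] at hr1
      have hcomb : (M - ε) * lam < ⟪y, mulVecE A x - b⟫ + f x * lam := by linarith
      have hinner : ⟪yh, b - mulVecE A x⟫ = (1 / lam) * ⟪y, mulVecE A x - b⟫ := by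
        rw [hyh, real_inner_smul_left]
        have : b - mulVecE A x = -(mulVecE A x - b) := by abel
        rw [this, inner_neg_right]
        ring
      rw [hinner]
      have hlam' : 0 < 1 / lam := by positivity
      calc M - ε = (1 / lam) * ((M - ε) * lam) := by field_simp
        _ < (1 / lam) * (⟪y, mulVecE A x - b⟫ + f x * lam) := by
            exact (mul_lt_mul_iff_right₀ hlam').2 hcomb
        _ = f x + 1 / lam * ⟪y, mulVecE A x - b⟫ := by field_simp; ring
    -- projection onto K
    set q : EuclideanSpace ℝ (Fin n) := mulVecE Aᵀ yh - c with hq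
    set z' : EuclideanSpace ℝ (Fin n) := p + t • q with hz'
    have hKcomplete : IsComplete K := hKcl.isComplete
    obtain ⟨xs, hxsK, hxsmin⟩ :=
      exists_norm_eq_iInf_of_complete_convex ⟨xb, hxbK⟩ hKcomplete hKconv z'
    have hproj : ∀ w ∈ K, ⟪z' - xs, w - xs⟫ ≤ 0 :=
      (norm_eq_iInf_iff_real_inner_le_zero hKconv hxsK).1 hxsmin
    -- orthogonality
    have horth : ⟪z' - xs, xs⟫ = 0 := by
      have h2 : (2 : ℝ) • xs ∈ K := hKcone xs hxsK 2 (by norm_num)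
      have h0 : (0 : EuclideanSpace ℝ (Fin n)) ∈ K := by
        have := hKcone xs hxsK 0 le_rfl
        rwa [zero_smul] at this
      have ha := hproj _ h2
      have hb' := hproj _ h0
      have e1 : (2 : ℝ) • xs - xs = xs := by module
      have e2 : (0 : EuclideanSpace ℝ (Fin n)) - xs = -xs := by module
      rw [e1] at ha
      rw [e2, inner_neg_right] at hb'
      linarith
    set us : EuclideanSpace ℝ (Fin n) := (1 / t) • (z' - xs) with hus
    have husKo : us ∈ Ko := by
      rw [hKo]
      intro w hw
      have hsum : xs + w ∈ K := by
        have hmid : (1 / 2 : ℝ) • xs + (1 / 2 : ℝ) • w ∈ K :=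
          hKconv hxsK hw (by norm_num) (by norm_num) (by norm_num)
        have := hKcone _ hmid 2 (by norm_num)
        have e : (2 : ℝ) • ((1 / 2 : ℝ) • xs + (1 / 2 : ℝ) • w) = xs + w := by module
        rwa [e] at this
      have := hproj _ hsum
      have e : xs + w - xs = w := by module
      rw [e] at this
      rw [hus, real_inner_smul_left]
      have h1t : 0 ≤ 1 / t := by positivity
      exact mul_nonpos_of_nonneg_of_nonpos h1t this
    -- the dual vector d for (yh, us)
    have hd : mulVecE Aᵀ yh - us - c = (1 / t) • (xs - p) := by
      rw [hus, hz', hq]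
      have : mulVecE Aᵀ yh - c - (1 / t) • (p + t • (mulVecE Aᵀ yh - c) - xs)
          = (1 / t) • (xs - p) + (1 - t * (1 / t)) • (mulVecE Aᵀ yh - c) := by
        module
      rw [sub_right_comm, this, mul_one_div_cancel ht.ne', sub_self, zero_smul, add_zero]
    -- the dual value equals f xs + ⟪yh, b - A xs⟫
    set v₁ : ℝ := ⟪b, yh⟫ - ⟪p, mulVecE Aᵀ yh - us - c⟫
        - (t / 2) * ‖mulVecE Aᵀ yh - us - c‖ ^ 2 with hv₁
    have hv₁D : v₁ ∈ D := ⟨yh, us, husKo, rfl⟩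
    have hxsus : ⟪xs, us⟫ = 0 := by
      rw [hus, real_inner_smul_right, real_inner_comm]
      rw [horth, mul_zero]
    have hveq : (f xs + ⟪yh, b - mulVecE A xs⟫) - v₁ = 0 := by
      have h := key_id A b c p xs us yh t ht.ne'
      rw [hd] at h
      have hzero : (xs - p) - t • ((1 / t) • (xs - p)) = 0 := by
        rw [smul_smul, mul_one_div_cancel ht.ne', one_smul, sub_self]
      rw [hv₁, hf, hd]
      rw [hzero] at h
      simp only [norm_zero] at h
      rw [hxsus] at h
      simpa using h
    have hv₁big : M - ε < v₁ := by
      have := hL0 xs hxsK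
      linarith
    have : v₁ ≤ sSup D := le_csSup hDbdd hv₁D
    linarith
  have hle : M ≤ sSup D := by
    by_contra hcon
    push_neg at hcon
    obtain ⟨ε, hε, hεlt⟩ : ∃ ε : ℝ, 0 < ε ∧ sSup D < M - ε := by
      refine ⟨(M - sSup D) / 2, by linarith, by linarith⟩
    exact absurd (hard ε hε) (not_le.2 hεlt)
  exact le_antisymm hsup_le hle
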